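/- Let M be the 7×7 complex matrix with rows (0, 0, 0, 1, −i, 1/2 + i/2, 1), (0, 1, 0, 0, 1, i, 2), (0, 2, 1, 0, 0, 1, 2 − 2i), (0, 1, 1/2 − i/2, 1, 0, 0, 1), (0, 1, 1, 2i, 1, 0, 0), (0, 0, 1, 2 + 2i, −2i, 1, 0), (1, 0, 0, 0, 0, 0, 0), and let S be the 7×7 real matrix given by S_{ij} = |M_{ij}|² for all i, j. Then rank M = 4 (over ℂ) and rank S = 4 (over ℝ). -/

import Mathlib

@[simp] lemma cons_val_five_aux {α : Type*} (x : α) (u : Fin 6 → α) :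
    Matrix.vecCons x u 5 = u 4 := rfl
@[simp] lemma cons_val_six_aux {α : Type*} (x : α) (u : Fin 6 → α) :
    Matrix.vecCons x u 6 = u 5 := rfl
@[simp] lemma cons_val_five_aux' {α : Type*} (x : α) (u : Fin 5 → α) :
    Matrix.vecCons x u 5 = u 4 := rfl

lemma rank_eq_four_of_factor {K : Type*} [Field K]
    (A : Matrix (Fin 7) (Fin 7) K)
    (X : Matrix (Fin 7) (Fin 4) K) (R : Matrix (Fin 4) (Fin 7) K)
    (L : Matrix (Fin 4) (Fin 7) K) (Rm : Matrix (Fin 7) (Fin 4) K)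
    (h1 : A = X * R) (h2 : L * A * Rm = 1) : A.rank = 4 := by
  refine le_antisymm ?_ ?_
  · calc A.rank = (X * R).rank := by rw [h1]
      _ ≤ X.rank := Matrix.rank_mul_le_left X R
      _ ≤ Fintype.card (Fin 4) := Matrix.rank_le_card_width X
      _ = 4 := by simp
  · calc (4 : ℕ) = (1 : Matrix (Fin 4) (Fin 4) K).rank := by
          rw [Matrix.rank_one]; simp
      _ = (L * A * Rm).rank := by rw [h2]
      _ ≤ (L * A).rank := Matrix.rank_mul_le_left _ _
      _ ≤ A.rank := Matrix.rank_mul_le_right _ _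

set_option maxHeartbeats 1600000 in
/-- Complex psd-minimality witness for the hexagonal pyramid (first seven-vertex
polytope with a degree-six vertex in Figure 5): the explicit complex matrix `M` and
its entrywise squared-modulus matrix `S` both have rank 4. -/
theorem stmt_16 (M : Matrix (Fin 7) (Fin 7) ℂ)
    (hM : M = !![0, 0, 0, 1, -Complex.I, 1/2 + Complex.I/2, 1;
                 0, 1, 0, 0, 1, Complex.I, 2;
                 0, 2, 1, 0, 0, 1, 2 - 2*Complex.I;
                 0, 1, 1/2 - Complex.I/2, 1, 0, 0, 1;
                 0, 1, 1, 2*Complex.I, 1, 0, 0;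
                 0, 0, 1, 2 + 2*Complex.I, -2*Complex.I, 1, 0;
                 1, 0, 0, 0, 0, 0, 0])
    (S : Matrix (Fin 7) (Fin 7) ℝ)
    (hS : ∀ i j : Fin 7, S i j = Complex.normSq (M i j)) :
    M.rank = 4 ∧ S.rank = 4 := by
  have hS' : S = !![0, 0, 0, 1, 1, 1/2, 1;
                    0, 1, 0, 0, 1, 1, 4;
                    0, 4, 1, 0, 0, 1, 8;
                    0, 1, 1/2, 1, 0, 0, 1;
                    0, 1, 1, 4, 1, 0, 0;
                    0, 0, 1, 8, 4, 1, 0;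
                    1, 0, 0, 0, 0, 0, 0] := by
    ext i j
    rw [hS, hM]
    fin_cases i <;> fin_cases j <;>
      simp [Complex.normSq_apply, Complex.ext_iff, Matrix.cons_val_succ, Matrix.vecHead, Matrix.vecTail] <;> norm_num
  constructor
  · apply rank_eq_four_of_factor M
      !![1, 0, 0, 0;
         0, 1, 0, 0;
         0, 0, 1, 0;
         1, Complex.I, 1/2 - Complex.I/2, 0;
         2*Complex.I, -1, 1, 0;
         2 + 2*Complex.I, -2, 1, 0;
         0, 0, 0, 1]
      !![0, 0, 0, 1, -Complex.I, 1/2 + Complex.I/2, 1;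
         0, 1, 0, 0, 1, Complex.I, 2;
         0, 2, 1, 0, 0, 1, 2 - 2*Complex.I;
         1, 0, 0, 0, 0, 0, 0]
      !![1, 0, 0, 0, 0, 0, 0;
         0, 1, 0, 0, 0, 0, 0;
         0, 0, 1, 0, 0, 0, 0;
         0, 0, 0, 0, 0, 0, 1]
      !![0, 0, 0, 1;
         0, 1, 0, 0;
         0, -2, 1, 0;
         1, 0, 0, 0;
         0, 0, 0, 0;
         0, 0, 0, 0;
         0, 0, 0, 0]
    · subst hM
      ext i j
      fin_cases i <;> fin_cases j <;>
        simp [Matrix.mul_apply, Fin.sum_univ_succ, Matrix.vecHead, Matrix.vecTail] <;>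
        try ring
      all_goals (try ring_nf); all_goals rw [Complex.I_sq]; all_goals norm_num
      all_goals ring
    · subst hM
      ext i j
      fin_cases i <;> fin_cases j <;>
        simp [Matrix.mul_apply, Fin.sum_univ_succ, Matrix.one_apply]
  · apply rank_eq_four_of_factor S
      !![1, 0, 0, 0;
         0, 1, 0, 0;
         0, 0, 1, 0;
         1, -1, 1/2, 0;
         4, -3, 1, 0;
         8, -4, 1, 0;
         0, 0, 0, 1]
      !![0, 0, 0, 1, 1, 1/2, 1;
         0, 1, 0, 0, 1, 1, 4;
         0, 4, 1, 0, 0, 1, 8;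
         1, 0, 0, 0, 0, 0, 0]
      !![1, 0, 0, 0, 0, 0, 0;
         0, 1, 0, 0, 0, 0, 0;
         0, 0, 1, 0, 0, 0, 0;
         0, 0, 0, 0, 0, 0, 1]
      !![0, 0, 0, 1;
         0, 1, 0, 0;
         0, -4, 1, 0;
         1, 0, 0, 0;
         0, 0, 0, 0;
         0, 0, 0, 0;
         0, 0, 0, 0]
    · subst hS'
      ext i j
      fin_cases i <;> fin_cases j <;>
        simp [Matrix.mul_apply, Fin.sum_univ_succ, Matrix.vecHead, Matrix.vecTail] <;>
        try ring
      all_goals (try ring_nf); all_goals rw [Complex.I_sq]; all_goals norm_num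
    · subst hS'
      ext i j
      fin_cases i <;> fin_cases j <;>
        simp [Matrix.mul_apply, Fin.sum_univ_succ, Matrix.one_apply]
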